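/- (Corollary 2: nonlinear systems with linear output, LPV-based LMI.) Assume μ > 0, P ≻ 0, R ∈ ℝ^{p×n}, and let Z be a structured multiplier matrix as in the context (size m·n̄², partitioned into n̄×n̄ blocks with symmetric positive definite diagonal blocks and symmetric positive semidefinite off-diagonal blocks, Z ≻ 0). Suppose that for every Φ ∈ 𝓕 (where 𝓕 is the set of stacked matrices whose (i,j)-th block is φ_ij · I_{2n+q} for some φ_ij ∈ [0, f_b(i,j)]), the symmetric 2×2 block matrix [[Σ, (𝕌 + ZℍΦ)ᵀ],[𝕌 + ZℍΦ, −2Z]] is negative definite. Set L = P⁻¹Rᵀ. Then for every choice of parameter sequences f_ij : ℕ → ℝ with 0 ≤ f_ij(k) ≤ f_b(i,j) (1 ≤ i ≤ m, 1 ≤ j ≤ n̄), every ω : ℕ → ℝ^q, and every e : ℕ → ℝ^n satisfying e(k+1) = (A − LC + Σ_{i,j} f_ij(k) G ℋ_ij H_i) e(k) + (E − LD) ω(k) for all k, one has for all N ∈ ℕ: Σ_{k=0}^{N−1} ‖e(k)‖² ≤ μ Σ_{k=0}^{N−1} ‖ω(k)‖² + λ_max(P) ‖e(0)‖². -/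

import Mathlib

open Matrix

lemma rayleigh {n : ℕ} (P : Matrix (Fin n) (Fin n) ℝ) (hP : P.IsHermitian)
    (x : Fin n → ℝ) :
    x ⬝ᵥ P *ᵥ x ≤ (⨆ i, hP.eigenvalues i) * (x ⬝ᵥ x) := by
  rcases Nat.eq_zero_or_pos n with h0 | hn
  · subst h0
    simp [dotProduct, ciSup_of_empty, Real.sSup_empty]
  set V : Matrix (Fin n) (Fin n) ℝ := (hP.eigenvectorUnitary : Matrix (Fin n) (Fin n) ℝ) with hV
  have hVV : V * star V = 1 := (Matrix.mem_unitaryGroup_iff).mp (hP.eigenvectorUnitary).2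
  have hsV : star V = Vᵀ := by
    ext i j; simp [Matrix.star_apply]
  set y : Fin n → ℝ := Vᵀ *ᵥ x with hy
  have hyy : y ⬝ᵥ y = x ⬝ᵥ x := by
    rw [hy, Matrix.mulVec_transpose]
    nth_rewrite 2 [← Matrix.mulVec_transpose]
    rw [Matrix.dotProduct_mulVec, Matrix.vecMul_vecMul, ← hsV, hVV, Matrix.vecMul_one]
  have hsum : x ⬝ᵥ P *ᵥ x = ∑ i, hP.eigenvalues i * (y i)^2 := by
    conv_lhs => rw [hP.spectral_theorem, Unitary.conjStarAlgAut_apply]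
    rw [hsV, ← hV, Matrix.mul_assoc, ← Matrix.mulVec_mulVec, Matrix.dotProduct_mulVec,
      ← Matrix.mulVec_transpose, ← hy, ← Matrix.mulVec_mulVec]
    have : (diagonal (RCLike.ofReal ∘ hP.eigenvalues) : Matrix (Fin n) (Fin n) ℝ) *ᵥ (Vᵀ *ᵥ x)
        = fun i => hP.eigenvalues i * y i := by
      funext i; simp [Matrix.mulVec_diagonal, hy]
    rw [this]
    simp [dotProduct, hy, sq, mul_comm, mul_assoc, mul_left_comm]
  have hbdd : BddAbove (Set.range hP.eigenvalues) := Set.Finite.bddAbove (Set.finite_range _)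
  have hle : ∀ i, hP.eigenvalues i ≤ ⨆ i, hP.eigenvalues i := fun i => le_ciSup hbdd i
  calc x ⬝ᵥ P *ᵥ x = ∑ i, hP.eigenvalues i * (y i)^2 := hsum
    _ ≤ ∑ i, (⨆ i, hP.eigenvalues i) * (y i)^2 := by
        apply Finset.sum_le_sum; intro i _;
        exact mul_le_mul_of_nonneg_right (hle i) (sq_nonneg _)
    _ = (⨆ i, hP.eigenvalues i) * (y ⬝ᵥ y) := by
        rw [← Finset.mul_sum]; congr 1; simp [dotProduct, sq]
    _ = _ := by rw [hyy]

section comp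
variable {n p q m n' : ℕ}
  (A : Matrix (Fin n) (Fin n) ℝ) (C : Matrix (Fin p) (Fin n) ℝ)
  (E : Matrix (Fin n) (Fin q) ℝ) (D : Matrix (Fin p) (Fin q) ℝ)
  (G : Matrix (Fin n) (Fin m) ℝ)
  (H : Fin m → Matrix (Fin n') (Fin n) ℝ)
  (P : Matrix (Fin n) (Fin n) ℝ)
  (R : Matrix (Fin p) (Fin n) ℝ)
  (Z : Matrix ((Fin m × Fin n') × Fin n') ((Fin m × Fin n') × Fin n') ℝ)
  (φ : Fin m → Fin n' → ℝ)
  (x : Fin n → ℝ) (y : Fin q → ℝ) (z : Fin n → ℝ)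

lemma hw_lemma :
    (Matrix.of (fun (rI : (Fin m × Fin n') × Fin n')
        (cI : (Fin m × Fin n') × (Fin n ⊕ (Fin q ⊕ Fin n))) =>
        if rI.1 = cI.1 then
          Sum.elim (fun a => H rI.1.1 rI.2 a) (fun _ => (0 : ℝ)) cI.2
        else 0) *
      Matrix.of (fun (rI : (Fin m × Fin n') × (Fin n ⊕ (Fin q ⊕ Fin n)))
        (c : Fin n ⊕ (Fin q ⊕ Fin n)) =>
        if rI.2 = c then φ rI.1.1 rI.1.2 else 0)) *ᵥ
      (Sum.elim x (Sum.elim y z)) =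
    fun rI => φ rI.1.1 rI.1.2 * (H rI.1.1 *ᵥ x) rI.2 := by
  funext rI
  simp only [Matrix.mulVec, Matrix.mul_apply, dotProduct, Matrix.of_apply,
    Fintype.sum_sum_type, Fintype.sum_prod_type, Sum.elim_inl, Sum.elim_inr]
  simp [Finset.sum_ite_eq, Finset.sum_ite_eq', ite_and, Finset.mul_sum, Finset.sum_mul,
    mul_comm, Matrix.mulVec, dotProduct, Prod.eq_iff_fst_eq_snd_eq, mul_left_comm]


lemma dot_trans {a b : Type*} [Fintype a] [Fintype b]
    (M : Matrix a b ℝ) (u : b → ℝ) (v : a → ℝ) :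
    u ⬝ᵥ Mᵀ *ᵥ v = v ⬝ᵥ M *ᵥ u := by
  rw [Matrix.mulVec_transpose, dotProduct_comm, Matrix.dotProduct_mulVec]

lemma hU_lemma :
    (fun rI : (Fin m × Fin n') × Fin n' => φ rI.1.1 rI.1.2 * (H rI.1.1 *ᵥ x) rI.2) ⬝ᵥ
      (Matrix.of (fun (rI : (Fin m × Fin n') × Fin n') (c : Fin n ⊕ (Fin q ⊕ Fin n)) =>
        Sum.elim (fun _ => (0 : ℝ)) (Sum.elim (fun _ => (0 : ℝ))
          (fun l => (P * G * Matrix.single rI.1.1 rI.1.2 (1 : ℝ))ᵀ rI.2 l)) c) *ᵥ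
        (Sum.elim x (Sum.elim y z))) =
    ∑ i : Fin m, ∑ j : Fin n',
      φ i j * (z ⬝ᵥ (P * G * Matrix.single i j (1 : ℝ) * H i) *ᵥ x) := by
  have h1 : (Matrix.of (fun (rI : (Fin m × Fin n') × Fin n') (c : Fin n ⊕ (Fin q ⊕ Fin n)) =>
        Sum.elim (fun _ => (0 : ℝ)) (Sum.elim (fun _ => (0 : ℝ))
          (fun l => (P * G * Matrix.single rI.1.1 rI.1.2 (1 : ℝ))ᵀ rI.2 l)) c) *ᵥ
        (Sum.elim x (Sum.elim y z))) =
      fun rI => ((P * G * Matrix.single rI.1.1 rI.1.2 (1 : ℝ))ᵀ *ᵥ z) rI.2 := by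
    funext rI
    simp [Matrix.mulVec, dotProduct, Fintype.sum_sum_type]
  rw [h1]
  simp only [dotProduct, Fintype.sum_prod_type]
  apply Finset.sum_congr rfl; intro i _
  apply Finset.sum_congr rfl; intro j _
  simp only [mul_assoc]
  rw [← Finset.mul_sum]
  congr 1
  show (H i *ᵥ x) ⬝ᵥ ((P * G * Matrix.single i j (1 : ℝ))ᵀ *ᵥ z) =
    z ⬝ᵥ ((P * G * Matrix.single i j (1 : ℝ) * H i) *ᵥ x)
  rw [dot_trans, Matrix.mulVec_mulVec]

lemma hSig_lemma (μ : ℝ) (hPt : Pᵀ = P) :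
    (Sum.elim x (Sum.elim y z)) ⬝ᵥ
      (Matrix.fromBlocks (1 - P) (Matrix.fromCols 0 (Aᵀ * P - Cᵀ * R))
        (Matrix.fromRows 0 (P * A - Rᵀ * C))
        (Matrix.fromBlocks (-(μ • (1 : Matrix (Fin q) (Fin q) ℝ)))
          (Eᵀ * P - Dᵀ * R) (P * E - Rᵀ * D) (-P))) *ᵥ
      (Sum.elim x (Sum.elim y z)) =
    x ⬝ᵥ x - x ⬝ᵥ P *ᵥ x - μ * (y ⬝ᵥ y) - z ⬝ᵥ P *ᵥ z
      + 2 * (z ⬝ᵥ (P * A - Rᵀ * C) *ᵥ x) + 2 * (z ⬝ᵥ (P * E - Rᵀ * D) *ᵥ y) := by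
  have hA' : Aᵀ * P - Cᵀ * R = (P * A - Rᵀ * C)ᵀ := by
    rw [Matrix.transpose_sub, Matrix.transpose_mul, Matrix.transpose_mul,
      Matrix.transpose_transpose, hPt]
  have hE' : Eᵀ * P - Dᵀ * R = (P * E - Rᵀ * D)ᵀ := by
    rw [Matrix.transpose_sub, Matrix.transpose_mul, Matrix.transpose_mul,
      Matrix.transpose_transpose, hPt]
  rw [Matrix.fromBlocks_mulVec]
  simp only [Sum.elim_comp_inl, Sum.elim_comp_inr]
  rw [Matrix.fromCols_mulVec_sumElim, Matrix.fromRows_mulVec, Matrix.fromBlocks_mulVec]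
  simp only [Sum.elim_comp_inl, Sum.elim_comp_inr]
  rw [sumElim_dotProduct_sumElim, hA', hE']
  simp only [Matrix.zero_mulVec, zero_add, add_zero, Matrix.sub_mulVec, Matrix.one_mulVec,
    Matrix.neg_mulVec, Matrix.smul_mulVec, Matrix.one_mulVec,
    dotProduct_add, dotProduct_sub, dotProduct_neg,
    dotProduct_smul, sumElim_dotProduct_sumElim, smul_eq_mul]
  rw [dot_trans (P * A - Rᵀ * C) x z, dot_trans (P * E - Rᵀ * D) y z]
  simp only [Matrix.sub_mulVec, dotProduct_sub, dotProduct_zero]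
  ring

lemma sum_mulVec' {ι a b : Type*} [Fintype b] (s : Finset ι)
    (M : ι → Matrix a b ℝ) (x : b → ℝ) :
    (∑ i ∈ s, M i) *ᵥ x = ∑ i ∈ s, M i *ᵥ x := by
  funext j
  simp [Matrix.mulVec, dotProduct, Finset.sum_apply, Finset.sum_mul, Matrix.sum_apply]
  rw [Finset.sum_comm]

lemma dot_sum' {ι a : Type*} [Fintype a] (s : Finset ι)
    (f : ι → (a → ℝ)) (z : a → ℝ) :
    z ⬝ᵥ (∑ i ∈ s, f i) = ∑ i ∈ s, z ⬝ᵥ f i := by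
  simp [dotProduct, Finset.sum_apply, Finset.mul_sum]
  rw [Finset.sum_comm]

lemma keyStep (μ : ℝ) (hP : P.PosDef)
    (U : Matrix ((Fin m × Fin n') × Fin n') (Fin n ⊕ (Fin q ⊕ Fin n)) ℝ)
    (hU : U = Matrix.of fun rI c =>
        Sum.elim (fun _ => (0 : ℝ)) (Sum.elim (fun _ => (0 : ℝ))
          (fun l => (P * G * Matrix.single rI.1.1 rI.1.2 (1 : ℝ))ᵀ rI.2 l)) c)
    (Hb : Matrix ((Fin m × Fin n') × Fin n')
        ((Fin m × Fin n') × (Fin n ⊕ (Fin q ⊕ Fin n))) ℝ)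
    (hHb : Hb = Matrix.of fun rI cI =>
        if rI.1 = cI.1 then
          Sum.elim (fun a => H rI.1.1 rI.2 a) (fun _ => (0 : ℝ)) cI.2
        else 0)
    (S : Matrix ((Fin m × Fin n') × (Fin n ⊕ (Fin q ⊕ Fin n)))
        (Fin n ⊕ (Fin q ⊕ Fin n)) ℝ)
    (hS : S = Matrix.of fun rI c => if rI.2 = c then φ rI.1.1 rI.1.2 else 0)
    (Sig : Matrix (Fin n ⊕ (Fin q ⊕ Fin n)) (Fin n ⊕ (Fin q ⊕ Fin n)) ℝ)
    (hSg : Sig = Matrix.fromBlocks (1 - P) (Matrix.fromCols 0 (Aᵀ * P - Cᵀ * R))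
        (Matrix.fromRows 0 (P * A - Rᵀ * C))
        (Matrix.fromBlocks (-(μ • (1 : Matrix (Fin q) (Fin q) ℝ)))
          (Eᵀ * P - Dᵀ * R) (P * E - Rᵀ * D) (-P)))
    (hM : (-(Matrix.fromBlocks Sig (U + Z * Hb * S)ᵀ
            (U + Z * Hb * S) (-((2 : ℝ) • Z)))).PosDef)
    (hz : z = (A - P⁻¹ * Rᵀ * C +
        ∑ i : Fin m, ∑ j : Fin n',
          φ i j • (G * Matrix.single i j (1 : ℝ) * H i)) *ᵥ x +
      (E - P⁻¹ * Rᵀ * D) *ᵥ y) :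
    x ⬝ᵥ x - μ * (y ⬝ᵥ y) + z ⬝ᵥ P *ᵥ z - x ⬝ᵥ P *ᵥ x ≤ 0 := by
  have hPt : Pᵀ = P := by
    rw [← Matrix.conjTranspose_eq_transpose_of_trivial]; exact hP.isHermitian
  have hPinv : P * P⁻¹ = 1 :=
    Matrix.mul_nonsing_inv _ (isUnit_iff_ne_zero.mpr hP.det_pos.ne')
  set v : Fin n ⊕ (Fin q ⊕ Fin n) → ℝ := Sum.elim x (Sum.elim y z) with hv
  set w : ((Fin m × Fin n') × Fin n') → ℝ :=
    fun rI => φ rI.1.1 rI.1.2 * (H rI.1.1 *ᵥ x) rI.2 with hwdef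
  have hw : (Hb * S) *ᵥ v = w := by
    rw [hHb, hS, hv, hwdef]; exact hw_lemma H φ x y z
  have hquad : (Sum.elim v w) ⬝ᵥ (Matrix.fromBlocks Sig (U + Z * Hb * S)ᵀ
      (U + Z * Hb * S) (-((2 : ℝ) • Z))) *ᵥ (Sum.elim v w) ≤ 0 := by
    by_cases h0 : Sum.elim v w = 0
    · rw [h0]; simp
    · have h := hM.dotProduct_mulVec_pos h0
      rw [star_trivial, Matrix.neg_mulVec, dotProduct_neg] at h
      linarith
  have hNv : (U + Z * Hb * S) *ᵥ v = U *ᵥ v + Z *ᵥ w := by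
    rw [Matrix.add_mulVec, Matrix.mul_assoc, ← Matrix.mulVec_mulVec, hw]
  have hexp : (Sum.elim v w) ⬝ᵥ (Matrix.fromBlocks Sig (U + Z * Hb * S)ᵀ
      (U + Z * Hb * S) (-((2 : ℝ) • Z))) *ᵥ (Sum.elim v w)
      = v ⬝ᵥ Sig *ᵥ v + 2 * (w ⬝ᵥ U *ᵥ v) := by
    rw [Matrix.fromBlocks_mulVec]
    simp only [Sum.elim_comp_inl, Sum.elim_comp_inr]
    rw [sumElim_dotProduct_sumElim]
    simp only [dotProduct_add]
    rw [dot_trans, hNv]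
    simp only [Matrix.neg_mulVec, dotProduct_neg, dotProduct_add,
      Matrix.smul_mulVec, dotProduct_smul, smul_eq_mul]
    ring
  have h7 : w ⬝ᵥ U *ᵥ v = ∑ i : Fin m, ∑ j : Fin n',
      φ i j * (z ⬝ᵥ (P * G * Matrix.single i j (1 : ℝ) * H i) *ᵥ x) := by
    rw [hU, hwdef, hv]; exact hU_lemma G H P φ x y z
  have hSv : v ⬝ᵥ Sig *ᵥ v =
      x ⬝ᵥ x - x ⬝ᵥ P *ᵥ x - μ * (y ⬝ᵥ y) - z ⬝ᵥ P *ᵥ z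
        + 2 * (z ⬝ᵥ (P * A - Rᵀ * C) *ᵥ x) + 2 * (z ⬝ᵥ (P * E - Rᵀ * D) *ᵥ y) := by
    rw [hSg, hv]; exact hSig_lemma A C E D P R x y z μ hPt
  have hPz : z ⬝ᵥ P *ᵥ z = z ⬝ᵥ (P * A - Rᵀ * C) *ᵥ x + z ⬝ᵥ (P * E - Rᵀ * D) *ᵥ y
      + ∑ i : Fin m, ∑ j : Fin n',
        φ i j * (z ⬝ᵥ (P * G * Matrix.single i j (1 : ℝ) * H i) *ᵥ x) := by
    have e1 : P * (A - P⁻¹ * Rᵀ * C +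
        ∑ i : Fin m, ∑ j : Fin n',
          φ i j • (G * Matrix.single i j (1 : ℝ) * H i))
        = (P * A - Rᵀ * C) + ∑ i : Fin m, ∑ j : Fin n',
            φ i j • (P * G * Matrix.single i j (1 : ℝ) * H i) := by
      rw [Matrix.mul_add, Matrix.mul_sub]
      congr 1
      · congr 1
        rw [show P⁻¹ * Rᵀ * C = P⁻¹ * (Rᵀ * C) by rw [Matrix.mul_assoc],
          ← Matrix.mul_assoc, hPinv, Matrix.one_mul]
      · rw [Finset.mul_sum]
        apply Finset.sum_congr rfl; intro i _
        rw [Finset.mul_sum]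
        apply Finset.sum_congr rfl; intro j _
        rw [Matrix.mul_smul]
        congr 1
        rw [← Matrix.mul_assoc, ← Matrix.mul_assoc]
    have e2 : P * (E - P⁻¹ * Rᵀ * D) = P * E - Rᵀ * D := by
      rw [Matrix.mul_sub]
      congr 1
      rw [show P⁻¹ * Rᵀ * D = P⁻¹ * (Rᵀ * D) by rw [Matrix.mul_assoc],
        ← Matrix.mul_assoc, hPinv, Matrix.one_mul]
    have hx1 : P *ᵥ z = (P * A - Rᵀ * C) *ᵥ x + (P * E - Rᵀ * D) *ᵥ y
        + ∑ i : Fin m, ∑ j : Fin n',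
          φ i j • ((P * G * Matrix.single i j (1 : ℝ) * H i) *ᵥ x) := by
      rw [hz, Matrix.mulVec_add, Matrix.mulVec_mulVec, Matrix.mulVec_mulVec, e1, e2,
        Matrix.add_mulVec, sum_mulVec']
      simp only [sum_mulVec', Matrix.smul_mulVec]
      abel
    rw [hx1]
    simp only [dotProduct_add, dot_sum', dotProduct_smul, smul_eq_mul]
  -- final combination
  have goal := hquad
  rw [hexp, hSv, h7] at goal
  linarith [goal, hPz]



open Matrix
open scoped BigOperators

/-- Corollary 2 of the paper (linear output, LPV-based LMI): if the 2×2 block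
LMI holds (≺ 0) at every parameter matrix `Φ ∈ 𝓕`, the H∞ performance bound
follows for the observer error dynamics, with `L = P⁻¹Rᵀ`. -/
theorem stmt_15
    (n p q m n' : ℕ)
    (A : Matrix (Fin n) (Fin n) ℝ) (C : Matrix (Fin p) (Fin n) ℝ)
    (E : Matrix (Fin n) (Fin q) ℝ) (D : Matrix (Fin p) (Fin q) ℝ)
    (G : Matrix (Fin n) (Fin m) ℝ)
    (H : Fin m → Matrix (Fin n') (Fin n) ℝ)
    (fb : Fin m → Fin n' → ℝ) (hfb : ∀ i j, 0 ≤ fb i j)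
    (μ : ℝ) (hμ : 0 < μ)
    (P : Matrix (Fin n) (Fin n) ℝ) (hP : P.PosDef)
    (R : Matrix (Fin p) (Fin n) ℝ)
    (Z : Matrix ((Fin m × Fin n') × Fin n') ((Fin m × Fin n') × Fin n') ℝ)
    (hZ : Z.PosDef)
    (hZdiag : ∀ ij : Fin m × Fin n',
      (Matrix.of fun k l => Z (ij, k) (ij, l)).PosDef)
    (hZoff : ∀ ij ij' : Fin m × Fin n', ij ≠ ij' →
      (Matrix.of fun k l => Z (ij, k) (ij', l)).PosSemidef) :
    -- the observer gain
    let L : Matrix (Fin n) (Fin p) ℝ := P⁻¹ * Rᵀ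
    -- canonical matrices ℋ_ij = e_m(i) e_{n̄}(j)ᵀ
    let Hcal : Fin m → Fin n' → Matrix (Fin m) (Fin n') ℝ := fun i j =>
      Matrix.single i j (1 : ℝ)
    -- Σ, as a 3×3 block matrix with block sizes n, q, n
    let Sig : Matrix (Fin n ⊕ (Fin q ⊕ Fin n)) (Fin n ⊕ (Fin q ⊕ Fin n)) ℝ :=
      Matrix.fromBlocks (1 - P) (Matrix.fromCols 0 (Aᵀ * P - Cᵀ * R))
        (Matrix.fromRows 0 (P * A - Rᵀ * C))
        (Matrix.fromBlocks (-(μ • (1 : Matrix (Fin q) (Fin q) ℝ)))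
          (Eᵀ * P - Dᵀ * R) (P * E - Rᵀ * D) (-P))
    -- 𝕌, stacked over the pairs (i,j), with blocks [0 0 (P G ℋ_ij)ᵀ]
    let U : Matrix ((Fin m × Fin n') × Fin n') (Fin n ⊕ (Fin q ⊕ Fin n)) ℝ :=
      Matrix.of fun rI c =>
        Sum.elim (fun _ => (0 : ℝ)) (Sum.elim (fun _ => (0 : ℝ))
          (fun l => (P * G * Hcal rI.1.1 rI.1.2)ᵀ rI.2 l)) c
    -- ℍ, block diagonal with diagonal blocks ℍ_i = [H_i 0 0]
    let Hb : Matrix ((Fin m × Fin n') × Fin n')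
        ((Fin m × Fin n') × (Fin n ⊕ (Fin q ⊕ Fin n))) ℝ :=
      Matrix.of fun rI cI =>
        if rI.1 = cI.1 then
          Sum.elim (fun a => H rI.1.1 rI.2 a) (fun _ => (0 : ℝ)) cI.2
        else 0
    -- a stacked parameter matrix with blocks φ_ij • I
    let stackF : (Fin m → Fin n' → ℝ) →
        Matrix ((Fin m × Fin n') × (Fin n ⊕ (Fin q ⊕ Fin n)))
          (Fin n ⊕ (Fin q ⊕ Fin n)) ℝ :=
      fun φ => Matrix.of fun rI c => if rI.2 = c then φ rI.1.1 rI.1.2 else 0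
    -- the LMI: for every Φ ∈ 𝓕 the 2×2 block matrix is ≺ 0
    (∀ φ : Fin m → Fin n' → ℝ, (∀ i j, 0 ≤ φ i j ∧ φ i j ≤ fb i j) →
        (-(Matrix.fromBlocks Sig (U + Z * Hb * stackF φ)ᵀ
            (U + Z * Hb * stackF φ) (-((2 : ℝ) • Z)))).PosDef) →
      ∀ (f : Fin m → Fin n' → ℕ → ℝ) (ω : ℕ → Fin q → ℝ) (e : ℕ → Fin n → ℝ),
        (∀ i j k, 0 ≤ f i j k ∧ f i j k ≤ fb i j) →
        (∀ k : ℕ, e (k + 1) =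
          (A - L * C +
              ∑ i : Fin m, ∑ j : Fin n', f i j k • (G * Hcal i j * H i)).mulVec
            (e k) + (E - L * D).mulVec (ω k)) →
        ∀ N : ℕ,
          ∑ k ∈ Finset.range N, e k ⬝ᵥ e k ≤
            μ * ∑ k ∈ Finset.range N, ω k ⬝ᵥ ω k +
              (⨆ i, hP.isHermitian.eigenvalues i) * (e 0 ⬝ᵥ e 0) := by
  intro L Hcal Sig U Hb stackF
  intro hLMI f ω e hf hdyn N
  have step : ∀ k : ℕ, e k ⬝ᵥ e k - μ * (ω k ⬝ᵥ ω k)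
      + e (k+1) ⬝ᵥ P *ᵥ e (k+1) - e k ⬝ᵥ P *ᵥ e k ≤ 0 := by
    intro k
    have h1 := hLMI (fun i j => f i j k) (fun i j => hf i j k)
    have hUeq : U = Matrix.of fun rI c =>
        Sum.elim (fun _ => (0 : ℝ)) (Sum.elim (fun _ => (0 : ℝ))
          (fun l => (P * G * Matrix.single rI.1.1 rI.1.2 (1 : ℝ))ᵀ rI.2 l)) c := rfl
    have hHbeq : Hb = Matrix.of fun rI cI =>
        if rI.1 = cI.1 then
          Sum.elim (fun a => H rI.1.1 rI.2 a) (fun _ => (0 : ℝ)) cI.2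
        else 0 := rfl
    have hSeq : stackF (fun i j => f i j k) = Matrix.of fun rI c =>
        if rI.2 = c then f rI.1.1 rI.1.2 k else 0 := rfl
    have hSgeq : Sig = Matrix.fromBlocks (1 - P) (Matrix.fromCols 0 (Aᵀ * P - Cᵀ * R))
        (Matrix.fromRows 0 (P * A - Rᵀ * C))
        (Matrix.fromBlocks (-(μ • (1 : Matrix (Fin q) (Fin q) ℝ)))
          (Eᵀ * P - Dᵀ * R) (P * E - Rᵀ * D) (-P)) := rfl
    have hzeq := hdyn k
    exact keyStep A C E D G H P R Z (fun i j => f i j k) (e k) (ω k) (e (k+1)) μ hP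
      U hUeq Hb hHbeq (stackF (fun i j => f i j k)) hSeq Sig hSgeq h1 hzeq
  have main : ∀ M : ℕ, ∑ k ∈ Finset.range M, e k ⬝ᵥ e k + e M ⬝ᵥ P *ᵥ e M ≤
      μ * ∑ k ∈ Finset.range M, ω k ⬝ᵥ ω k + e 0 ⬝ᵥ P *ᵥ e 0 := by
    intro M
    induction M with
    | zero => simp
    | succ M ih =>
      rw [Finset.sum_range_succ, Finset.sum_range_succ, mul_add]
      linarith [step M, ih]
  have hVN : 0 ≤ e N ⬝ᵥ P *ᵥ e N := by
    have h := hP.posSemidef.dotProduct_mulVec_nonneg (e N); rwa [star_trivial] at h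
  have hV0 : e 0 ⬝ᵥ P *ᵥ e 0 ≤ (⨆ i, hP.isHermitian.eigenvalues i) * (e 0 ⬝ᵥ e 0) :=
    rayleigh P hP.isHermitian (e 0)
  linarith [main N]
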